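/- arXiv:2403.02515 — 2 statements merged into one kernel-verified Lean document; each statement's English description precedes it below -/
import Mathlib

section
/- Glynn's formula: for any n×n complex matrix A, perm(A) = (1/2^n) Σ_{b ∈ {±1}^n} Π_{j=1}^n b_j (Ab)_j, where the sum is over all ±1 vectors b. -/
/-- The permanent of an `n × n` complex matrix. -/
noncomputable def permanent {n : ℕ} (A : Matrix (Fin n) (Fin n) ℂ) : ℂ :=
  ∑ σ : Equiv.Perm (Fin n), ∏ i, A i (σ i)

/-- Interpret a boolean as a sign `±1`. -/
noncomputable def pmOne (x : Bool) : ℂ := if x then 1 else -1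

lemma pmOne_sq (x : Bool) : pmOne x * pmOne x = 1 := by
  cases x <;> simp [pmOne]

lemma pmOne_pow (x : Bool) (k : ℕ) :
    pmOne x ^ k = if Even k then 1 else pmOne x := by
  induction k with
  | zero => simp
  | succ m ih =>
    rw [pow_succ, ih]
    by_cases h : Even m <;>
      simp [h, pmOne_sq, Nat.even_add_one, mul_comm]

open Finset in
lemma sum_prod_pmOne {n : ℕ} (S : Finset (Fin n)) :
    ∑ b : Fin n → Bool, ∏ i ∈ S, pmOne (b i) = if S = ∅ then (2 : ℂ) ^ n else 0 := by
  have key : ∑ b : Fin n → Bool, ∏ i ∈ S, pmOne (b i)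
      = ∑ b : Fin n → Bool, ∏ i, (if i ∈ S then pmOne (b i) else 1) := by
    refine Finset.sum_congr rfl fun b _ => ?_
    rw [Finset.prod_ite_mem, Finset.univ_inter]
  rw [key, ← Fintype.prod_sum fun i x => if i ∈ S then pmOne x else 1]
  have : ∀ i : Fin n, (∑ x : Bool, if i ∈ S then pmOne x else 1)
      = if i ∈ S then 0 else 2 := by
    intro i
    by_cases h : i ∈ S
    · simp [h, pmOne]
    · simp only [h, if_false]
      norm_num
  rw [Finset.prod_congr rfl fun i _ => this i]
  by_cases h : S = ∅
  · simp [h]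
  · obtain ⟨i, hi⟩ := Finset.nonempty_iff_ne_empty.2 h
    rw [if_neg h]
    exact Finset.prod_eq_zero (Finset.mem_univ i) (by simp [hi])

open Finset in
lemma glynn_inner_sum {n : ℕ} (f : Fin n → Fin n) :
    ∑ b : Fin n → Bool, ∏ j, pmOne (b j) * pmOne (b (f j))
      = if Function.Bijective f then (2 : ℂ) ^ n else 0 := by
  classical
  set c : Fin n → ℕ := fun i => #{j | f j = i} with hc
  have step1 : ∀ b : Fin n → Bool,
      ∏ j, pmOne (b j) * pmOne (b (f j))
        = ∏ i ∈ {i | Even (c i)}, pmOne (b i) := by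
    intro b
    rw [Finset.prod_mul_distrib]
    have h2 : ∏ j, pmOne (b (f j)) = ∏ i, pmOne (b i) ^ c i := by
      rw [← Finset.prod_fiberwise' univ f (fun i => pmOne (b i))]
      exact Finset.prod_congr rfl fun i _ => (Finset.prod_const _)
    rw [h2, ← Finset.prod_mul_distrib]
    have h3 : ∀ i : Fin n, pmOne (b i) * pmOne (b i) ^ c i
        = if Even (c i) then pmOne (b i) else 1 := by
      intro i
      rw [pmOne_pow]
      by_cases h : Even (c i) <;> simp [h, pmOne_sq]
    rw [Finset.prod_congr rfl fun i _ => h3 i, ← Finset.prod_filter]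
  rw [Finset.sum_congr rfl fun b _ => step1 b, sum_prod_pmOne]
  have hbij : ({i | Even (c i)} : Finset (Fin n)) = ∅ ↔ Function.Bijective f := by
    constructor
    · intro h
      have hsurj : Function.Surjective f := by
        intro i
        have hi : ¬ Even (c i) := by
          intro he
          have : i ∈ ({i | Even (c i)} : Finset (Fin n)) := by simpa using he
          simp [h] at this
        have : c i ≠ 0 := fun h0 => hi (h0 ▸ Even.zero)
        have : ({j | f j = i} : Finset (Fin n)).Nonempty :=
          Finset.card_pos.1 (Nat.pos_of_ne_zero this)
        obtain ⟨j, hj⟩ := this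
        exact ⟨j, by simpa using hj⟩
      exact Finite.surjective_iff_bijective.1 hsurj
    · intro h
      have hone : ∀ i, c i = 1 := by
        intro i
        have hfib : ({j | f j = i} : Finset (Fin n))
            = {(Equiv.ofBijective f h).symm i} := by
          ext j
          simp only [Finset.mem_filter, Finset.mem_univ, true_and,
            Finset.mem_singleton, Finset.mem_singleton]
          rw [← Equiv.ofBijective_apply f h, ← Equiv.eq_symm_apply]
        simp [hc, hfib]
      ext i
      simp [hone]
  rw [if_congr hbij rfl rfl]

open Finset in
lemma sum_bijective {n : ℕ} (g : (Fin n → Fin n) → ℂ) :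
    ∑ f : Fin n → Fin n, (if Function.Bijective f then g f else 0)
      = ∑ σ : Equiv.Perm (Fin n), g ⇑σ := by
  classical
  rw [← Finset.sum_filter]
  symm
  refine Finset.sum_bij (fun (σ : Equiv.Perm (Fin n)) (_ : σ ∈ Finset.univ) => ⇑σ) ?_ ?_ ?_ ?_
  · intro σ _
    simp only [Finset.mem_filter, Finset.mem_univ, true_and]
    exact σ.bijective
  · intro σ _ τ _ h
    exact Equiv.coe_fn_injective h
  · intro f hf
    simp only [Finset.mem_filter, Finset.mem_univ, true_and] at hf
    exact ⟨Equiv.ofBijective f hf, Finset.mem_univ _, rfl⟩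
  · intros; rfl

/-- Glynn's formula: for any `n × n` complex matrix `A`,
`perm A = 2⁻ⁿ Σ_{b ∈ {±1}ⁿ} Π_j b_j (A b)_j`. -/
theorem glynn_formula {n : ℕ} (A : Matrix (Fin n) (Fin n) ℂ) :
    permanent A =
      (1 / 2 ^ n) *
        ∑ b : Fin n → Bool, ∏ j, pmOne (b j) * (∑ i, A j i * pmOne (b i)) := by
  classical
  have expand : ∀ b : Fin n → Bool,
      ∏ j, pmOne (b j) * (∑ i, A j i * pmOne (b i))
        = ∑ f : Fin n → Fin n, (∏ j, A j (f j)) * ∏ j, pmOne (b j) * pmOne (b (f j)) := by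
    intro b
    rw [Finset.prod_mul_distrib, Fintype.prod_sum fun j i => A j i * pmOne (b i),
      Finset.mul_sum]
    refine Finset.sum_congr rfl fun f _ => ?_
    rw [Finset.prod_mul_distrib, Finset.prod_mul_distrib]
    ring
  calc permanent A
      = (1 / 2 ^ n) * ((2 : ℂ) ^ n * permanent A) := by
        have : (2 : ℂ) ^ n ≠ 0 := pow_ne_zero _ two_ne_zero
        field_simp
    _ = (1 / 2 ^ n) *
        ∑ b : Fin n → Bool, ∏ j, pmOne (b j) * (∑ i, A j i * pmOne (b i)) := by
      congr 1
      rw [Finset.sum_congr rfl fun b _ => expand b, Finset.sum_comm]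
      have : ∀ f : Fin n → Fin n,
          ∑ b : Fin n → Bool, (∏ j, A j (f j)) * ∏ j, pmOne (b j) * pmOne (b (f j))
            = if Function.Bijective f then (∏ j, A j (f j)) * 2 ^ n else 0 := by
        intro f
        rw [← Finset.mul_sum, glynn_inner_sum]
        by_cases h : Function.Bijective f <;> simp [h]
      rw [Finset.sum_congr rfl fun f _ => this f, sum_bijective]
      rw [permanent, Finset.mul_sum]
      exact Finset.sum_congr rfl fun σ _ => mul_comm _ _
end

section
/- Generalized X-measurement on fully distinguishable photons: with input density matrix built from c₁₀|φ₁₀⟩⊗(photon in mode 0, internal state ξ) + c₀₁|φ₀₁⟩⊗(photon in mode 1, internal state ξ') with ⟨ξ'|ξ⟩ = 0, the post-measurement state after the Hadamard beamsplitter and projection onto a single-photon outcome is the mixed state (|c₁₀|²|φ₁₀⟩⟨φ₁₀| + |c₀₁|²|φ₀₁⟩⟨φ₀₁|)/(|c₁₀|²+|c₀₁|²), for either measurement outcome. -/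
open scoped ComplexConjugate

/-- The (unnormalized) post-measurement vector on `H' ⊗ K` after the Hadamard beamsplitter
and projection of the mode factor onto `|1,0⟩` (sign `s = 1`) or `|0,1⟩` (sign `s = -1`),
for the input `c₁₀|φ₁₀⟩ ⊗ (photon in mode 0, internal ξ) + c₀₁|φ₀₁⟩ ⊗ (photon in mode 1,
internal ξ')`. -/
noncomputable def postMeasVec {p q : ℕ} (c₁₀ c₀₁ : ℂ) (φ₁₀ φ₀₁ : Fin p → ℂ)
    (ξ ξ' : Fin q → ℂ) (s : ℂ) : Fin p → Fin q → ℂ :=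
  fun h k => ((Real.sqrt 2 : ℂ))⁻¹ * (c₁₀ * φ₁₀ h * ξ k + s * (c₀₁ * φ₀₁ h * ξ' k))

/-- Generalized X-measurement on fully distinguishable photons (`⟨ξ'|ξ⟩ = 0`): for either
measurement outcome, the normalized post-measurement state on `H'`, obtained by tracing out
the internal space `K`, is the mixed state
`(|c₁₀|²|φ₁₀⟩⟨φ₁₀| + |c₀₁|²|φ₀₁⟩⟨φ₀₁|)/(|c₁₀|²+|c₀₁|²)`. -/
theorem generalized_X_measurement_distinguishable {p q : ℕ}
    (c₁₀ c₀₁ : ℂ) (φ₁₀ φ₀₁ : Fin p → ℂ) (ξ ξ' : Fin q → ℂ)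
    (hφ₁₀ : ∑ h, ‖φ₁₀ h‖ ^ 2 = 1) (hφ₀₁ : ∑ h, ‖φ₀₁ h‖ ^ 2 = 1)
    (hξ : ∑ k, ‖ξ k‖ ^ 2 = 1) (hξ' : ∑ k, ‖ξ' k‖ ^ 2 = 1)
    (horth : ∑ k, conj (ξ' k) * ξ k = 0) :
    ∀ s ∈ ({1, -1} : Set ℂ), ∀ h h' : Fin p,
      (∑ k, postMeasVec c₁₀ c₀₁ φ₁₀ φ₀₁ ξ ξ' s h k *
          conj (postMeasVec c₁₀ c₀₁ φ₁₀ φ₀₁ ξ ξ' s h' k)) /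
          (((‖c₁₀‖ ^ 2 + ‖c₀₁‖ ^ 2 : ℝ) : ℂ) / 2) =
        ((‖c₁₀‖ ^ 2 : ℝ) * (φ₁₀ h * conj (φ₁₀ h')) +
            (‖c₀₁‖ ^ 2 : ℝ) * (φ₀₁ h * conj (φ₀₁ h'))) /
          ((‖c₁₀‖ ^ 2 + ‖c₀₁‖ ^ 2 : ℝ) : ℂ) := by
  intro s hs h h'
  have hcs : conj s = s := by rcases hs with rfl | rfl <;> simp
  have hss : s * s = 1 := by rcases hs with rfl | rfl <;> simp
  have h2 : ((Real.sqrt 2 : ℝ) : ℂ) * ((Real.sqrt 2 : ℝ) : ℂ) = 2 := by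
    rw [← Complex.ofReal_mul, Real.mul_self_sqrt (by norm_num)]
    norm_num
  have hsqrt : ((Real.sqrt 2 : ℂ))⁻¹ * ((Real.sqrt 2 : ℂ))⁻¹ = (2 : ℂ)⁻¹ := by
    rw [← mul_inv, h2]
  have hnorm : ∀ z : ℂ, z * conj z = ((‖z‖ ^ 2 : ℝ) : ℂ) := by
    intro z
    rw [Complex.mul_conj, Complex.normSq_eq_norm_sq]
  -- the four inner products
  have ha : ∑ k, ξ k * conj (ξ k) = 1 := by
    simp only [hnorm]
    rw [← Complex.ofReal_sum, hξ]; norm_num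
  have hb : ∑ k, ξ' k * conj (ξ' k) = 1 := by
    simp only [hnorm]
    rw [← Complex.ofReal_sum, hξ']; norm_num
  have hc : ∑ k, ξ k * conj (ξ' k) = 0 := by
    calc ∑ k, ξ k * conj (ξ' k) = ∑ k, conj (ξ' k) * ξ k := by
          exact Finset.sum_congr rfl fun k _ => mul_comm _ _
      _ = 0 := horth
  have hd : ∑ k, ξ' k * conj (ξ k) = 0 := by
    have h0 : ∑ k, conj (ξ k) * ξ' k = 0 := by simpa using congrArg conj hc
    calc ∑ k, ξ' k * conj (ξ k) = ∑ k, conj (ξ k) * ξ' k := by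
          exact Finset.sum_congr rfl fun k _ => mul_comm _ _
      _ = 0 := h0
  have key : (∑ k, postMeasVec c₁₀ c₀₁ φ₁₀ φ₀₁ ξ ξ' s h k *
      conj (postMeasVec c₁₀ c₀₁ φ₁₀ φ₀₁ ξ ξ' s h' k)) =
      (((‖c₁₀‖ ^ 2 : ℝ) : ℂ) * (φ₁₀ h * conj (φ₁₀ h')) +
        ((‖c₀₁‖ ^ 2 : ℝ) : ℂ) * (φ₀₁ h * conj (φ₀₁ h'))) / 2 := by
    have expand : ∀ k, postMeasVec c₁₀ c₀₁ φ₁₀ φ₀₁ ξ ξ' s h k *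
        conj (postMeasVec c₁₀ c₀₁ φ₁₀ φ₀₁ ξ ξ' s h' k) =
        (2 : ℂ)⁻¹ * ((c₁₀ * conj c₁₀ * (φ₁₀ h * conj (φ₁₀ h'))) * (ξ k * conj (ξ k)) +
          (c₀₁ * conj c₀₁ * (φ₀₁ h * conj (φ₀₁ h'))) * (ξ' k * conj (ξ' k)) +
          (s * (c₁₀ * conj c₀₁ * (φ₁₀ h * conj (φ₀₁ h')))) * (ξ k * conj (ξ' k)) +
          (s * (c₀₁ * conj c₁₀ * (φ₀₁ h * conj (φ₁₀ h')))) * (ξ' k * conj (ξ k))) := by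
      intro k
      simp only [postMeasVec, map_mul, map_add, map_inv₀, Complex.conj_ofReal, hcs]
      rw [← hsqrt]
      ring_nf
      rw [show s ^ 2 = 1 from by rw [sq, hss]]
      ring
    simp only [expand, ← Finset.mul_sum]
    rw [Finset.sum_add_distrib, Finset.sum_add_distrib, Finset.sum_add_distrib,
      ← Finset.mul_sum, ← Finset.mul_sum, ← Finset.mul_sum, ← Finset.mul_sum,
      ha, hb, hc, hd, hnorm c₁₀, hnorm c₀₁]
    ring
  rw [key]
  rw [div_div_div_comm]
  norm_num
end
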